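/- Assume moreover that the training-error vector evolves linearly under the step, v' = (I − η H) v, where H is a real symmetric positive semidefinite n×n matrix all of whose eigenvalues λ satisfy η λ ≤ 1, and let u be a unit eigenvector of H with eigenvalue λ₁ ≥ λ⁻ > 0. Set A = |⟨v, u⟩|, B = ‖v − ⟨v, u⟩ u‖, ρ = 1 − η λ⁻, Φ = 2m/(μ√n), ν₁ = 4 M₁ Φ max_{r ∈ [m]} ‖w_r‖ + 4 M₁ (Φ/μ) η ‖v‖₁, and ω₁ = (ρ² A² + B²)/n + ν₁, where M₁ ≥ 0. Then after one gradient-descent step, ‖v'‖²/n + 4 M₁ Φ · max(max_{r ∈ [m]} ‖w_r‖, max_{r ∈ [m]} ‖w_r'‖) ≤ ω₁. -/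

import Mathlib

open scoped RealInnerProductSpace BigOperators
open Matrix

private lemma dot_sym' {n : ℕ} {S : Matrix (Fin n) (Fin n) ℝ} (hS : S.IsHermitian)
    (x y : Fin n → ℝ) : (S *ᵥ x) ⬝ᵥ y = x ⬝ᵥ (S *ᵥ y) := by
  have hST : Sᵀ = S := by
    rw [← Matrix.conjTranspose_eq_transpose_of_trivial]; exact hS
  rw [dotProduct_mulVec, ← mulVec_transpose, hST]

private lemma inner_eq_dot' {n : ℕ} (x y : EuclideanSpace ℝ (Fin n)) :
    ⟪x, y⟫ = (x : Fin n → ℝ) ⬝ᵥ (y : Fin n → ℝ) := by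
  simp [PiLp.inner_apply, dotProduct, RCLike.inner_apply, mul_comm]

open scoped MatrixOrder in
private lemma aux_contraction' {n : ℕ} {M : Matrix (Fin n) (Fin n) ℝ}
    (hM : M.PosSemidef) (hIM : ((1 : Matrix (Fin n) (Fin n) ℝ) - M).PosSemidef)
    (p : Fin n → ℝ) : (M *ᵥ p) ⬝ᵥ (M *ᵥ p) ≤ p ⬝ᵥ p := by
  have hle : ∀ q : Fin n → ℝ, q ⬝ᵥ (M *ᵥ q) ≤ q ⬝ᵥ q := by
    intro q
    have h := hIM.dotProduct_mulVec_nonneg q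
    simp only [star_trivial, sub_mulVec, one_mulVec, dotProduct_sub] at h
    linarith
  set T := CFC.sqrt M with hT
  have hTsym : T.IsHermitian := (Matrix.nonneg_iff_posSemidef.mp (CFC.sqrt_nonneg M)).1
  have hTT : T * T = M := CFC.sqrt_mul_sqrt_self M hM.nonneg
  have hMM : M * M = T * (M * T) := by rw [← hTT]; simp only [Matrix.mul_assoc]
  calc (M *ᵥ p) ⬝ᵥ (M *ᵥ p) = p ⬝ᵥ ((M * M) *ᵥ p) := by
        rw [dot_sym' hM.1, mulVec_mulVec]
    _ = (T *ᵥ p) ⬝ᵥ (M *ᵥ (T *ᵥ p)) := by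
        rw [hMM, ← mulVec_mulVec, ← dot_sym' hTsym, mulVec_mulVec]
    _ ≤ (T *ᵥ p) ⬝ᵥ (T *ᵥ p) := hle _
    _ = p ⬝ᵥ (M *ᵥ p) := by rw [dot_sym' hTsym, mulVec_mulVec, hTT]
    _ ≤ p ⬝ᵥ p := hle _

private lemma aux_psd_one_sub' {n : ℕ} {H : Matrix (Fin n) (Fin n) ℝ} {η : ℝ} (hη : 0 < η)
    (hPSD : H.PosSemidef)
    (heig : ∀ (lam : ℝ) (z : EuclideanSpace ℝ (Fin n)),
      z ≠ 0 → H.mulVec z = lam • z → η * lam ≤ 1) :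
    ((1 : Matrix (Fin n) (Fin n) ℝ) - η • H).PosSemidef := by
  have hHerm : ((1 : Matrix (Fin n) (Fin n) ℝ) - η • H).IsHermitian := by
    have h1 : Hᵀ = H := by
      rw [← Matrix.conjTranspose_eq_transpose_of_trivial]; exact hPSD.1
    simp [Matrix.IsHermitian, Matrix.conjTranspose_sub, Matrix.conjTranspose_smul, h1]
  refine hHerm.posSemidef_iff_eigenvalues_nonneg.mpr fun i => show (0 : ℝ) ≤ _ from ?_
  set t := hHerm.eigenvalues i with ht
  set z := hHerm.eigenvectorBasis i with hzdef
  have hz : ((1 : Matrix (Fin n) (Fin n) ℝ) - η • H) *ᵥ ⇑z = t • ⇑z :=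
    hHerm.mulVec_eigenvectorBasis i
  have hz0 : z ≠ 0 := hHerm.eigenvectorBasis.orthonormal.ne_zero i
  simp only [sub_mulVec, one_mulVec, smul_mulVec] at hz
  have h2 : η • (H *ᵥ ⇑z) = (1 - t) • ⇑z := by
    rw [sub_smul, one_smul, ← hz]; abel
  have hX : H *ᵥ ⇑z = ((1 - t)/η) • ⇑z := by
    have h3 := congrArg (fun y : Fin n → ℝ => (η⁻¹ : ℝ) • y) h2
    simpa [smul_smul, inv_mul_cancel₀ hη.ne', div_eq_inv_mul] using h3
  have h4 := heig ((1 - t)/η) z hz0 hX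
  have hcancel : η * ((1 - t)/η) = 1 - t := by field_simp
  rw [hcancel] at h4
  linarith

set_option maxHeartbeats 1000000 in
theorem surrogate_population_loss_bound_after_gd_step
    {d m n : ℕ} (hm : 0 < m) (hn : 0 < n)
    (μ η : ℝ) (hμ : 0 < μ) (hη : 0 < η)
    (a : Fin m → ℝ) (ha : ∀ r, a r = 1 ∨ a r = -1)
    (ζ ζ' : ℝ → ℝ) (hζ : LipschitzWith 1 ζ) (hζ0 : ζ 0 = 0)
    (hderiv : ∀ z, HasDerivAt ζ (ζ' z) z) (hζ'le : ∀ z, |ζ' z| ≤ 1)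
    (x : Fin n → EuclideanSpace ℝ (Fin d)) (hx : ∀ i, ‖x i‖ = 1)
    (v v' : EuclideanSpace ℝ (Fin n))
    (w w' : Fin m → EuclideanSpace ℝ (Fin d))
    (hupd : ∀ r, w' r =
      w r - (η / μ) • ∑ i, (v i * a r * ζ' ⟪w r, x i⟫) • x i)
    (H : Matrix (Fin n) (Fin n) ℝ) (hSym : H.IsSymm) (hPSD : H.PosSemidef)
    (heig : ∀ (lam : ℝ) (z : EuclideanSpace ℝ (Fin n)),
      z ≠ 0 → H.mulVec z = lam • z → η * lam ≤ 1)
    (u : EuclideanSpace ℝ (Fin n)) (hu : ‖u‖ = 1)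
    (lam1 lamMinus : ℝ)
    (hu1 : H.mulVec u = lam1 • u)
    (hlamMinus : 0 < lamMinus) (hlam1 : lamMinus ≤ lam1)
    (hv' : v' = ((1 : Matrix (Fin n) (Fin n) ℝ) - η • H).mulVec v)
    (M1 : ℝ) (hM1 : 0 ≤ M1)
    (A B ρ Φ ν1 ω1 : ℝ)
    (hA : A = |⟪v, u⟫|)
    (hB : B = ‖v - ⟪v, u⟫ • u‖)
    (hρ : ρ = 1 - η * lamMinus)
    (hΦ : Φ = 2 * m / (μ * Real.sqrt n))
    (hν1 : ν1 =
      4 * M1 * Φ * (Finset.univ.sup' ⟨⟨0, hm⟩, Finset.mem_univ _⟩ fun r => ‖w r‖)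
        + 4 * M1 * (Φ / μ) * η * ∑ i, |v i|)
    (hω1 : ω1 = (ρ ^ 2 * A ^ 2 + B ^ 2) / n + ν1) :
    ‖v'‖ ^ 2 / n + 4 * M1 * Φ *
      max (Finset.univ.sup' ⟨⟨0, hm⟩, Finset.mem_univ _⟩ fun r => ‖w r‖)
          (Finset.univ.sup' ⟨⟨0, hm⟩, Finset.mem_univ _⟩ fun r => ‖w' r‖) ≤ ω1 := by
  -- Part 1 : ‖v'‖² ≤ ρ²A² + B²
  set M : Matrix (Fin n) (Fin n) ℝ := (1 : Matrix (Fin n) (Fin n) ℝ) - η • H with hMdef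
  have hMpsd : M.PosSemidef := aux_psd_one_sub' hη hPSD heig
  have hIMpsd : ((1 : Matrix (Fin n) (Fin n) ℝ) - M).PosSemidef := by
    have h : (1 : Matrix (Fin n) (Fin n) ℝ) - M = η • H := by
      rw [hMdef, sub_sub_cancel]
    rw [h]
    refine Matrix.PosSemidef.of_dotProduct_mulVec_nonneg ?_ fun y => ?_
    · have h1 : Hᵀ = H := by
        rw [← Matrix.conjTranspose_eq_transpose_of_trivial]; exact hPSD.1
      simp [Matrix.IsHermitian, Matrix.conjTranspose_smul,
        Matrix.conjTranspose_eq_transpose_of_trivial, Matrix.transpose_smul, h1]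
    · have h2 := hPSD.dotProduct_mulVec_nonneg y
      simp only [star_trivial, smul_mulVec, dotProduct_smul, smul_eq_mul] at h2 ⊢
      exact mul_nonneg hη.le h2
  obtain ⟨uf, hufu⟩ : ∃ t : Fin n → ℝ, t = u := ⟨u, rfl⟩
  obtain ⟨vf, hvfv⟩ : ∃ t : Fin n → ℝ, t = v := ⟨v, rfl⟩
  set c : ℝ := ⟪v, u⟫ with hc
  set p : Fin n → ℝ := fun i => vf i - c * uf i with hp
  have hu0 : u ≠ 0 := by intro h; rw [h, norm_zero] at hu; norm_num at hu
  have huu : uf ⬝ᵥ uf = 1 := by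
    rw [hufu, ← inner_eq_dot', real_inner_self_eq_norm_sq, hu]; norm_num
  have huv : uf ⬝ᵥ vf = c := by
    rw [hufu, hvfv, ← inner_eq_dot', real_inner_comm]
  have hup : uf ⬝ᵥ p = 0 := by
    have hexp : uf ⬝ᵥ p = uf ⬝ᵥ vf - c * (uf ⬝ᵥ uf) := by
      simp only [hp, dotProduct, mul_sub, Finset.mul_sum]
      rw [Finset.sum_sub_distrib]
      congr 1
      refine Finset.sum_congr rfl fun i _ => ?_
      ring
    rw [hexp, huu, huv, mul_one, sub_self]
  have hMu : M *ᵥ uf = (1 - η * lam1) • uf := by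
    rw [hufu, hMdef, sub_mulVec, one_mulVec, smul_mulVec, hu1]
    funext i
    simp only [Pi.sub_apply, Pi.smul_apply, PiLp.smul_apply, smul_eq_mul]
    ring
  have hvdec : vf = c • uf + p := by
    funext i
    simp only [Pi.add_apply, Pi.smul_apply, smul_eq_mul, hp]
    ring
  have hv'f : @Eq (Fin n → ℝ) v' ((c * (1 - η * lam1)) • uf + M *ᵥ p) := by
    rw [hv', ← hvfv, hvdec, mulVec_add, mulVec_smul, hMu, smul_smul]
  have hq0 : uf ⬝ᵥ (M *ᵥ p) = 0 := by
    rw [← dot_sym' hMpsd.1, hMu, smul_dotProduct, hup, smul_eq_mul, mul_zero]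
  have hnorm : ‖v'‖ ^ 2 = (c * (1 - η * lam1)) ^ 2 + (M *ᵥ p) ⬝ᵥ (M *ᵥ p) := by
    rw [← real_inner_self_eq_norm_sq, inner_eq_dot']
    rw [hv'f]
    simp only [add_dotProduct, dotProduct_add, smul_dotProduct, dotProduct_smul,
      smul_eq_mul, huu, hq0, mul_zero, add_zero]
    rw [dotProduct_comm (M *ᵥ p) uf, hq0]
    ring
  have hBp : B ^ 2 = p ⬝ᵥ p := by
    rw [hB, ← real_inner_self_eq_norm_sq, inner_eq_dot']
    congr 1 <;>
    · funext i
      simp only [hp, PiLp.sub_apply, PiLp.smul_apply, smul_eq_mul, hufu, hvfv]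
  have hA2 : A ^ 2 = c ^ 2 := by rw [hA, sq_abs]
  have hlam1le : η * lam1 ≤ 1 := heig lam1 u hu0 hu1
  have hfac0 : 0 ≤ 1 - η * lam1 := by linarith
  have hfacrho : 1 - η * lam1 ≤ ρ := by
    rw [hρ]
    have : η * lamMinus ≤ η * lam1 := by nlinarith
    linarith
  have hvnorm : ‖v'‖ ^ 2 ≤ ρ ^ 2 * A ^ 2 + B ^ 2 := by
    rw [hnorm, hA2, hBp]
    have h1 : (M *ᵥ p) ⬝ᵥ (M *ᵥ p) ≤ p ⬝ᵥ p := aux_contraction' hMpsd hIMpsd p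
    have h3 : (1 - η * lam1) ^ 2 ≤ ρ ^ 2 := by nlinarith
    have h2 : (c * (1 - η * lam1)) ^ 2 ≤ ρ ^ 2 * c ^ 2 := by nlinarith [sq_nonneg c, h3]
    linarith
  -- Part 2 : weight norms
  set V : ℝ := ∑ i, |v i| with hVdef
  have hV0 : 0 ≤ V := Finset.sum_nonneg fun i _ => abs_nonneg _
  have hdivnn : 0 ≤ η / μ := le_of_lt (div_pos hη hμ)
  have hwr : ∀ r, ‖w' r‖ ≤ ‖w r‖ + (η / μ) * V := by
    intro r
    rw [hupd r]
    refine (norm_sub_le _ _).trans ?_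
    have hsum : ‖∑ i, (v i * a r * ζ' ⟪w r, x i⟫) • x i‖ ≤ V := by
      refine (norm_sum_le _ _).trans ?_
      rw [hVdef]
      refine Finset.sum_le_sum fun i _ => ?_
      rw [norm_smul, Real.norm_eq_abs, hx i, mul_one]
      have h1 : |a r| = 1 := by rcases ha r with h | h <;> simp [h]
      calc |v i * a r * ζ' ⟪w r, x i⟫| = |v i| * |a r| * |ζ' ⟪w r, x i⟫| := by
            rw [abs_mul, abs_mul]
        _ ≤ |v i| * 1 * 1 := by
            rw [h1]
            exact mul_le_mul_of_nonneg_left (hζ'le _) (by positivity)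
        _ = |v i| := by ring
    have hsm : ‖(η / μ) • ∑ i, (v i * a r * ζ' ⟪w r, x i⟫) • x i‖ ≤ (η / μ) * V := by
      rw [norm_smul, Real.norm_eq_abs, abs_of_nonneg hdivnn]
      exact mul_le_mul_of_nonneg_left hsum hdivnn
    linarith
  set S : ℝ := Finset.univ.sup' ⟨⟨0, hm⟩, Finset.mem_univ _⟩ fun r => ‖w r‖ with hSdef
  set S' : ℝ := Finset.univ.sup' ⟨⟨0, hm⟩, Finset.mem_univ _⟩ fun r => ‖w' r‖ with hS'def
  have hS'le : S' ≤ S + (η / μ) * V := by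
    refine Finset.sup'_le _ _ fun r _ => ?_
    have h1 : ‖w r‖ ≤ S := Finset.le_sup' (fun r => ‖w r‖) (Finset.mem_univ r)
    linarith [hwr r]
  have hmax : max S S' ≤ S + (η / μ) * V :=
    max_le (le_add_of_nonneg_right (mul_nonneg hdivnn hV0)) hS'le
  have hΦ0 : 0 ≤ Φ := by
    rw [hΦ]
    positivity
  have hcoef : 0 ≤ 4 * M1 * Φ := by positivity
  have hn' : (0 : ℝ) < n := by exact_mod_cast hn
  have hfin1 : ‖v'‖ ^ 2 / n ≤ (ρ ^ 2 * A ^ 2 + B ^ 2) / n := by gcongr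
  have hfin2 : 4 * M1 * Φ * max S S' ≤ 4 * M1 * Φ * (S + (η / μ) * V) :=
    mul_le_mul_of_nonneg_left hmax hcoef
  have heq : (ρ ^ 2 * A ^ 2 + B ^ 2) / n + 4 * M1 * Φ * (S + (η / μ) * V) = ω1 := by
    rw [hω1, hν1]
    ring
  linarith
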